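/- Sum rule for the bipartite ferromagnet: for every m̄_σ, m̄_τ ∈ ℝ, A_N = A^{trial}(m̄_σ, m̄_τ) + ∫_0^1 R_N(t) dt, where A_N = (1/N) ln Σ_{σ,τ} e^{-H_N}, A^{trial}(m̄_σ, m̄_τ) = ln 2 + α ln cosh(β_σ α m̄_σ + β_{στ}(1-α) m̄_τ) + (1-α) ln cosh(β_{στ} α m̄_σ + β_τ(1-α) m̄_τ) - [β_{στ} α(1-α) m̄_σ m̄_τ + (β_σ/2)α² m̄_σ² + (β_τ/2)(1-α)² m̄_τ²], and R_N(t) = β_{στ} α(1-α)⟨(m_σ-m̄_σ)(m_τ-m̄_τ)⟩_t + (β_σ α²/2)⟨(m_σ-m̄_σ)²⟩_t + (β_τ(1-α)²/2)⟨(m_τ-m̄_τ)²⟩_t. -/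

import Mathlib

open Real Finset

/-- A Boolean spin mapped to ±1. -/
noncomputable def spin (b : Bool) : ℝ := if b then 1 else -1

/-- Total spin of a configuration. -/
noncomputable def tot {n : ℕ} (σ : Fin n → Bool) : ℝ := ∑ i, spin (σ i)

/-- Magnetization of a configuration. -/
noncomputable def mag {n : ℕ} (σ : Fin n → Bool) : ℝ := tot σ / (n : ℝ)

/-- Minus the interpolating Hamiltonian: `-H_N(t)`. Note `Σ_{ij} σ_i τ_j = (Σσ)(Στ)`,
`Σ_{ij} σ_i σ_j = (Σσ)²`, etc. -/
noncomputable def Eint (Nσ Nτ : ℕ) (βσ βτ βστ Cσ Cτ t : ℝ)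
    (σ : Fin Nσ → Bool) (τ : Fin Nτ → Bool) : ℝ :=
  t * (βστ / ((Nσ : ℝ) + (Nτ : ℝ)) * (tot σ * tot τ)
      + βσ / (2 * ((Nσ : ℝ) + (Nτ : ℝ))) * (tot σ) ^ 2
      + βτ / (2 * ((Nσ : ℝ) + (Nτ : ℝ))) * (tot τ) ^ 2)
    + (1 - t) * (Cσ * tot σ + Cτ * tot τ)

/-- Interpolating partition function. -/
noncomputable def Zint (Nσ Nτ : ℕ) (βσ βτ βστ Cσ Cτ t : ℝ) : ℝ :=
  ∑ σ : Fin Nσ → Bool, ∑ τ : Fin Nτ → Bool, Real.exp (Eint Nσ Nτ βσ βτ βστ Cσ Cτ t σ τ)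

/-- Interpolating pressure `A_N(t) = (1/N) ln Z_N(t)`. -/
noncomputable def Aint (Nσ Nτ : ℕ) (βσ βτ βστ Cσ Cτ t : ℝ) : ℝ :=
  (1 / ((Nσ : ℝ) + (Nτ : ℝ))) * Real.log (Zint Nσ Nτ βσ βτ βστ Cσ Cτ t)

/-- Gibbs average `⟨O⟩_t` with the interpolating weight. -/
noncomputable def gibbs (Nσ Nτ : ℕ) (βσ βτ βστ Cσ Cτ t : ℝ)
    (O : (Fin Nσ → Bool) → (Fin Nτ → Bool) → ℝ) : ℝ :=
  (∑ σ : Fin Nσ → Bool, ∑ τ : Fin Nτ → Bool,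
      O σ τ * Real.exp (Eint Nσ Nτ βσ βτ βστ Cσ Cτ t σ τ)) / Zint Nσ Nτ βσ βτ βστ Cσ Cτ t

/-- Trial pressure of the fully interacting bipartite ferromagnet. -/
noncomputable def Atrial (α βσ βτ βστ mσ mτ : ℝ) : ℝ :=
  Real.log 2 + α * Real.log (Real.cosh (βσ * α * mσ + βστ * (1 - α) * mτ))
    + (1 - α) * Real.log (Real.cosh (βστ * α * mσ + βτ * (1 - α) * mτ))
    - (βστ * α * (1 - α) * mσ * mτ + (βσ / 2) * α ^ 2 * mσ ^ 2
        + (βτ / 2) * (1 - α) ^ 2 * mτ ^ 2)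

/-! ### Auxiliary material -/

/-- The `t`-coefficient of `Eint`. -/
noncomputable def Ea (Nσ Nτ : ℕ) (βσ βτ βστ : ℝ) (σ : Fin Nσ → Bool) (τ : Fin Nτ → Bool) : ℝ :=
  βστ / ((Nσ : ℝ) + (Nτ : ℝ)) * (tot σ * tot τ)
    + βσ / (2 * ((Nσ : ℝ) + (Nτ : ℝ))) * (tot σ) ^ 2
    + βτ / (2 * ((Nσ : ℝ) + (Nτ : ℝ))) * (tot τ) ^ 2

/-- The `(1-t)`-coefficient of `Eint`. -/
noncomputable def Eb (Nσ Nτ : ℕ) (Cσ Cτ : ℝ) (σ : Fin Nσ → Bool) (τ : Fin Nτ → Bool) : ℝ :=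
  Cσ * tot σ + Cτ * tot τ

lemma Eint_eq (Nσ Nτ : ℕ) (βσ βτ βστ Cσ Cτ t : ℝ) (σ : Fin Nσ → Bool) (τ : Fin Nτ → Bool) :
    Eint Nσ Nτ βσ βτ βστ Cσ Cτ t σ τ
      = t * Ea Nσ Nτ βσ βτ βστ σ τ + (1 - t) * Eb Nσ Nτ Cσ Cτ σ τ := rfl

/-- Numerator of the `t`-derivative of the partition function. -/
noncomputable def Snum (Nσ Nτ : ℕ) (βσ βτ βστ Cσ Cτ t : ℝ) : ℝ :=
  ∑ σ : Fin Nσ → Bool, ∑ τ : Fin Nτ → Bool,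
    (Ea Nσ Nτ βσ βτ βστ σ τ - Eb Nσ Nτ Cσ Cτ σ τ) * Real.exp (Eint Nσ Nτ βσ βτ βστ Cσ Cτ t σ τ)

lemma Zint_pos (Nσ Nτ : ℕ) (βσ βτ βστ Cσ Cτ t : ℝ) : 0 < Zint Nσ Nτ βσ βτ βστ Cσ Cτ t := by
  apply Finset.sum_pos (fun σ _ => Finset.sum_pos (fun τ _ => Real.exp_pos _) Finset.univ_nonempty)
    Finset.univ_nonempty

lemma hasDerivAt_Zint (Nσ Nτ : ℕ) (βσ βτ βστ Cσ Cτ t : ℝ) :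
    HasDerivAt (fun s => Zint Nσ Nτ βσ βτ βστ Cσ Cτ s) (Snum Nσ Nτ βσ βτ βστ Cσ Cτ t) t := by
  unfold Zint Snum
  apply HasDerivAt.fun_sum
  intro σ _
  apply HasDerivAt.fun_sum
  intro τ _
  have h1 : HasDerivAt (fun s : ℝ => Eint Nσ Nτ βσ βτ βστ Cσ Cτ s σ τ)
      (Ea Nσ Nτ βσ βτ βστ σ τ - Eb Nσ Nτ Cσ Cτ σ τ) t := by
    simp only [Eint_eq]
    have := ((hasDerivAt_id t).mul_const (Ea Nσ Nτ βσ βτ βστ σ τ)).add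
      (((hasDerivAt_const t (1:ℝ)).sub (hasDerivAt_id t)).mul_const (Eb Nσ Nτ Cσ Cτ σ τ))
    exact this.congr_deriv (by ring)
  have := h1.exp
  exact this.congr_deriv (by ring)

lemma continuous_Eint (Nσ Nτ : ℕ) (βσ βτ βστ Cσ Cτ : ℝ) (σ : Fin Nσ → Bool) (τ : Fin Nτ → Bool) :
    Continuous (fun t => Eint Nσ Nτ βσ βτ βστ Cσ Cτ t σ τ) := by
  unfold Eint; fun_prop

lemma continuous_Zint (Nσ Nτ : ℕ) (βσ βτ βστ Cσ Cτ : ℝ) :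
    Continuous (fun t => Zint Nσ Nτ βσ βτ βστ Cσ Cτ t) := by
  unfold Zint
  exact continuous_finset_sum _ fun σ _ => continuous_finset_sum _ fun τ _ =>
    (continuous_Eint Nσ Nτ βσ βτ βστ Cσ Cτ σ τ).rexp

lemma continuous_Snum (Nσ Nτ : ℕ) (βσ βτ βστ Cσ Cτ : ℝ) :
    Continuous (fun t => Snum Nσ Nτ βσ βτ βστ Cσ Cτ t) := by
  unfold Snum
  exact continuous_finset_sum _ fun σ _ => continuous_finset_sum _ fun τ _ =>
    continuous_const.mul ((continuous_Eint Nσ Nτ βσ βτ βστ Cσ Cτ σ τ).rexp)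

lemma hasDerivAt_Aint (Nσ Nτ : ℕ) (βσ βτ βστ Cσ Cτ t : ℝ) :
    HasDerivAt (fun s => Aint Nσ Nτ βσ βτ βστ Cσ Cτ s)
      (1 / ((Nσ : ℝ) + (Nτ : ℝ)) *
        (Snum Nσ Nτ βσ βτ βστ Cσ Cτ t / Zint Nσ Nτ βσ βτ βστ Cσ Cτ t)) t := by
  unfold Aint
  exact ((hasDerivAt_Zint Nσ Nτ βσ βτ βστ Cσ Cτ t).log
    (Zint_pos Nσ Nτ βσ βτ βστ Cσ Cτ t).ne').const_mul _

lemma pointwise_id (Nσr Nτr α mbσ mbτ βσ βτ βστ Cσ Cτ tσ tτ : ℝ)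
    (hσ : 0 < Nσr) (hτ : 0 < Nτr)
    (hα : α = Nσr / (Nσr + Nτr))
    (hCσ : Cσ = α * βσ * mbσ + βστ * (1 - α) * mbτ)
    (hCτ : Cτ = βστ * α * mbσ + (1 - α) * βτ * mbτ) :
    βστ * α * (1 - α) * ((tσ / Nσr - mbσ) * (tτ / Nτr - mbτ))
      + βσ * α ^ 2 / 2 * ((tσ / Nσr - mbσ) ^ 2)
      + βτ * (1 - α) ^ 2 / 2 * ((tτ / Nτr - mbτ) ^ 2)
    = (1 / (Nσr + Nτr)) *
        ((βστ / (Nσr + Nτr) * (tσ * tτ) + βσ / (2 * (Nσr + Nτr)) * tσ ^ 2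
            + βτ / (2 * (Nσr + Nτr)) * tτ ^ 2) - (Cσ * tσ + Cτ * tτ))
      + (βστ * α * (1 - α) * mbσ * mbτ + (βσ / 2) * α ^ 2 * mbσ ^ 2
          + (βτ / 2) * (1 - α) ^ 2 * mbτ ^ 2) := by
  have hc : 0 < Nσr + Nτr := by linarith
  subst hα hCσ hCτ
  field_simp
  ring

lemma gibbs_combination (Nσ Nτ : ℕ) (hσ : 1 ≤ Nσ) (hτ : 1 ≤ Nτ)
    (βσ βτ βστ α mbσ mbτ Cσ Cτ t : ℝ)
    (hα : α = (Nσ : ℝ) / ((Nσ : ℝ) + (Nτ : ℝ)))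
    (hCσ : Cσ = α * βσ * mbσ + βστ * (1 - α) * mbτ)
    (hCτ : Cτ = βστ * α * mbσ + (1 - α) * βτ * mbτ) :
    βστ * α * (1 - α) *
        gibbs Nσ Nτ βσ βτ βστ Cσ Cτ t (fun σ τ => (mag σ - mbσ) * (mag τ - mbτ))
      + βσ * α ^ 2 / 2 * gibbs Nσ Nτ βσ βτ βστ Cσ Cτ t (fun σ _ => (mag σ - mbσ) ^ 2)
      + βτ * (1 - α) ^ 2 / 2 * gibbs Nσ Nτ βσ βτ βστ Cσ Cτ t (fun _ τ => (mag τ - mbτ) ^ 2)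
    = 1 / ((Nσ : ℝ) + (Nτ : ℝ)) *
        (Snum Nσ Nτ βσ βτ βστ Cσ Cτ t / Zint Nσ Nτ βσ βτ βστ Cσ Cτ t)
      + (βστ * α * (1 - α) * mbσ * mbτ + (βσ / 2) * α ^ 2 * mbσ ^ 2
          + (βτ / 2) * (1 - α) ^ 2 * mbτ ^ 2) := by
  have hNσ : (0:ℝ) < (Nσ : ℝ) := by exact_mod_cast hσ
  have hNτ : (0:ℝ) < (Nτ : ℝ) := by exact_mod_cast hτ
  have hZ := (Zint_pos Nσ Nτ βσ βτ βστ Cσ Cτ t).ne'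
  unfold gibbs
  rw [mul_div_assoc', mul_div_assoc', mul_div_assoc', ← add_div, ← add_div,
    mul_div_assoc', div_add' _ _ _ hZ]
  congr 1
  unfold Zint Snum
  simp only [Finset.mul_sum, ← Finset.sum_add_distrib]
  refine Finset.sum_congr rfl fun σ _ => Finset.sum_congr rfl fun τ _ => ?_
  have hpt := pointwise_id (Nσ : ℝ) (Nτ : ℝ) α mbσ mbτ βσ βτ βστ Cσ Cτ (tot σ) (tot τ)
    hNσ hNτ hα hCσ hCτ
  unfold mag at *
  unfold Ea Eb
  linear_combination Real.exp (Eint Nσ Nτ βσ βτ βστ Cσ Cτ t σ τ) * hpt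

lemma sum_exp_tot (n : ℕ) (C : ℝ) :
    ∑ σ : Fin n → Bool, Real.exp (C * tot σ) = (2 * Real.cosh C) ^ n := by
  have h : ∀ σ : Fin n → Bool, Real.exp (C * tot σ) = ∏ i, Real.exp (C * spin (σ i)) := by
    intro σ
    rw [← Real.exp_sum, tot, Finset.mul_sum]
  simp_rw [h]
  rw [← Fintype.piFinset_univ,
    ← Finset.prod_univ_sum (fun _ : Fin n => (univ : Finset Bool))
      (fun _ b => Real.exp (C * spin b))]
  have : ∑ b : Bool, Real.exp (C * spin b) = 2 * Real.cosh C := by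
    simp [spin, Real.cosh_eq]
    ring
  rw [Finset.prod_const, Finset.card_univ, Fintype.card_fin, this]

lemma Zint_zero (Nσ Nτ : ℕ) (βσ βτ βστ Cσ Cτ : ℝ) :
    Zint Nσ Nτ βσ βτ βστ Cσ Cτ 0
      = (2 * Real.cosh Cσ) ^ Nσ * (2 * Real.cosh Cτ) ^ Nτ := by
  unfold Zint
  have h : ∀ (σ : Fin Nσ → Bool) (τ : Fin Nτ → Bool),
      Real.exp (Eint Nσ Nτ βσ βτ βστ Cσ Cτ 0 σ τ)
        = Real.exp (Cσ * tot σ) * Real.exp (Cτ * tot τ) := by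
    intro σ τ
    rw [← Real.exp_add]
    congr 1
    unfold Eint
    ring
  simp_rw [h, ← Finset.mul_sum, ← Finset.sum_mul, sum_exp_tot]

lemma Aint_zero (Nσ Nτ : ℕ) (hσ : 1 ≤ Nσ) (hτ : 1 ≤ Nτ) (βσ βτ βστ α Cσ Cτ : ℝ)
    (hα : α = (Nσ : ℝ) / ((Nσ : ℝ) + (Nτ : ℝ))) :
    Aint Nσ Nτ βσ βτ βστ Cσ Cτ 0
      = Real.log 2 + α * Real.log (Real.cosh Cσ) + (1 - α) * Real.log (Real.cosh Cτ) := by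
  have hNσ : (0:ℝ) < (Nσ : ℝ) := by exact_mod_cast hσ
  have hNτ : (0:ℝ) < (Nτ : ℝ) := by exact_mod_cast hτ
  have hc : (0:ℝ) < (Nσ : ℝ) + (Nτ : ℝ) := by linarith
  have hcoshσ : (0:ℝ) < Real.cosh Cσ := Real.cosh_pos Cσ
  have hcoshτ : (0:ℝ) < Real.cosh Cτ := Real.cosh_pos Cτ
  have h2σ : (0:ℝ) < 2 * Real.cosh Cσ := by linarith
  have h2τ : (0:ℝ) < 2 * Real.cosh Cτ := by linarith
  unfold Aint
  rw [Zint_zero, Real.log_mul (by positivity) (by positivity), Real.log_pow, Real.log_pow,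
    Real.log_mul (by norm_num) hcoshσ.ne', Real.log_mul (by norm_num) hcoshτ.ne']
  have h1α : 1 - α = (Nτ : ℝ) / ((Nσ : ℝ) + (Nτ : ℝ)) := by
    rw [hα]; field_simp; ring
  rw [h1α, hα]
  field_simp
  ring

/-- Sum rule for the bipartite ferromagnet: the pressure (interpolation at `t = 1`,
which is the pressure of the original model) equals the trial pressure plus the
integrated fluctuation rest. -/
theorem ferro_sum_rule (Nσ Nτ : ℕ) (hσ : 1 ≤ Nσ) (hτ : 1 ≤ Nτ)
    (βσ βτ βστ α mbσ mbτ Cσ Cτ : ℝ)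
    (hα : α = (Nσ : ℝ) / ((Nσ : ℝ) + (Nτ : ℝ)))
    (hCσ : Cσ = α * βσ * mbσ + βστ * (1 - α) * mbτ)
    (hCτ : Cτ = βστ * α * mbσ + (1 - α) * βτ * mbτ) :
    Aint Nσ Nτ βσ βτ βστ Cσ Cτ 1
      = Atrial α βσ βτ βστ mbσ mbτ +
        ∫ t in (0:ℝ)..1,
          (βστ * α * (1 - α) *
              gibbs Nσ Nτ βσ βτ βστ Cσ Cτ t (fun σ τ => (mag σ - mbσ) * (mag τ - mbτ))
            + βσ * α ^ 2 / 2 *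
              gibbs Nσ Nτ βσ βτ βστ Cσ Cτ t (fun σ _ => (mag σ - mbσ) ^ 2)
            + βτ * (1 - α) ^ 2 / 2 *
              gibbs Nσ Nτ βσ βτ βστ Cσ Cτ t (fun _ τ => (mag τ - mbτ) ^ 2)) := by
  set K : ℝ := βστ * α * (1 - α) * mbσ * mbτ + (βσ / 2) * α ^ 2 * mbσ ^ 2
      + (βτ / 2) * (1 - α) ^ 2 * mbτ ^ 2 with hK
  set φ : ℝ → ℝ := fun t => 1 / ((Nσ : ℝ) + (Nτ : ℝ)) *
      (Snum Nσ Nτ βσ βτ βστ Cσ Cτ t / Zint Nσ Nτ βσ βτ βστ Cσ Cτ t) with hφ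
  have hcontφ : Continuous φ := by
    apply continuous_const.mul
    exact (continuous_Snum Nσ Nτ βσ βτ βστ Cσ Cτ).div (continuous_Zint Nσ Nτ βσ βτ βστ Cσ Cτ)
      (fun t => (Zint_pos Nσ Nτ βσ βτ βστ Cσ Cτ t).ne')
  have hftc : ∫ t in (0:ℝ)..1, φ t
      = Aint Nσ Nτ βσ βτ βστ Cσ Cτ 1 - Aint Nσ Nτ βσ βτ βστ Cσ Cτ 0 :=
    intervalIntegral.integral_eq_sub_of_hasDerivAt
      (fun t _ => hasDerivAt_Aint Nσ Nτ βσ βτ βστ Cσ Cτ t)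
      (hcontφ.intervalIntegrable 0 1)
  have hcongr : ∫ t in (0:ℝ)..1,
      (βστ * α * (1 - α) *
          gibbs Nσ Nτ βσ βτ βστ Cσ Cτ t (fun σ τ => (mag σ - mbσ) * (mag τ - mbτ))
        + βσ * α ^ 2 / 2 *
          gibbs Nσ Nτ βσ βτ βστ Cσ Cτ t (fun σ _ => (mag σ - mbσ) ^ 2)
        + βτ * (1 - α) ^ 2 / 2 *
          gibbs Nσ Nτ βσ βτ βστ Cσ Cτ t (fun _ τ => (mag τ - mbτ) ^ 2))
      = ∫ t in (0:ℝ)..1, (φ t + K) := by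
    apply intervalIntegral.integral_congr
    intro t _
    exact gibbs_combination Nσ Nτ hσ hτ βσ βτ βστ α mbσ mbτ Cσ Cτ t hα hCσ hCτ
  have hsplit : ∫ t in (0:ℝ)..1, (φ t + K)
      = (∫ t in (0:ℝ)..1, φ t) + K := by
    rw [intervalIntegral.integral_add (hcontφ.intervalIntegrable 0 1)
      (intervalIntegrable_const), intervalIntegral.integral_const]
    simp
  have hA0 : Aint Nσ Nτ βσ βτ βστ Cσ Cτ 0
      = Real.log 2 + α * Real.log (Real.cosh Cσ) + (1 - α) * Real.log (Real.cosh Cτ) :=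
    Aint_zero Nσ Nτ hσ hτ βσ βτ βστ α Cσ Cτ hα
  have hAtrial : Atrial α βσ βτ βστ mbσ mbτ = Aint Nσ Nτ βσ βτ βστ Cσ Cτ 0 - K := by
    have e1 : βσ * α * mbσ + βστ * (1 - α) * mbτ = Cσ := by rw [hCσ]; ring
    have e2 : βστ * α * mbσ + βτ * (1 - α) * mbτ = Cτ := by rw [hCτ]; ring
    rw [hA0, Atrial, e1, e2, hK]
  rw [hcongr, hsplit, hftc, hAtrial]
  ring
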